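/- Let G = (V,E) be a finite simple graph and let A be a symmetric real matrix with rows and columns indexed by V such that A_{ij} = 1 for every pair {i,j} that is not an edge of G (including the diagonal entries A_{ii} = 1, since G has no loops). Then the independence number α(G) is at most the maximal eigenvalue λ_max(A) of A. -/

import Mathlib

open scoped InnerProductSpace in
lemma rayleigh_aux {V : Type*} [Fintype V] [DecidableEq V]
    (A : Matrix V V ℝ) (hA : A.IsHermitian) (x : EuclideanSpace ℝ V) :
    ∑ i, ∑ j, x i * A i j * x j ≤ (⨆ i, hA.eigenvalues i) * ∑ i, x i * x i := by
  classical
  set B := hA.eigenvectorBasis with hB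
  set lam := hA.eigenvalues with hlam
  have hbdd : BddAbove (Set.range lam) := Set.Finite.bddAbove (Set.finite_range _)
  set M : ℝ := ⨆ i, lam i with hM
  -- y = A *ᵥ x as a EuclideanSpace element
  set y : EuclideanSpace ℝ V := (WithLp.equiv 2 (V → ℝ)).symm (A.mulVec x) with hy
  have hyi : ∀ i, y i = ∑ j, A i j * x j := by
    intro i; simp [hy, Matrix.mulVec, dotProduct]
  have hinner : ∀ (u v : EuclideanSpace ℝ V), ⟪u, v⟫_ℝ = ∑ i, u i * v i := by
    intro u v; simp [PiLp.inner_apply, mul_comm]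
  -- key: ⟪B j, y⟫ = lam j * ⟪B j, x⟫
  have key : ∀ j, ⟪B j, y⟫_ℝ = lam j * ⟪B j, x⟫_ℝ := by
    intro j
    have hev := hA.mulVec_eigenvectorBasis j
    rw [hinner, hinner]
    calc ∑ i, B j i * y i = ∑ i, ∑ k, B j i * (A i k * x k) := by
          simp_rw [hyi, Finset.mul_sum]
      _ = ∑ k, (∑ i, A k i * B j i) * x k := by
          rw [Finset.sum_comm]
          congr 1; ext k
          rw [Finset.sum_mul]
          congr 1; ext i
          have hsym : A i k = A k i := by
            have := hA.apply i k; simp at this; rw [this]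
          rw [hsym]; ring
      _ = ∑ k, (A.mulVec (fun i => B j i)) k * x k := by
          simp [Matrix.mulVec, dotProduct]
      _ = ∑ k, (lam j * B j k) * x k := by
          have hev2 : ∀ k, A.mulVec (fun i => B j i) k = lam j * B j k := by
            intro k
            have := congrFun hev k
            simpa using this
          simp_rw [hev2]
      _ = lam j * ∑ k, B j k * x k := by
          rw [Finset.mul_sum]; congr 1; ext k; ring
  have hxy : ⟪x, y⟫_ℝ = ∑ i, ∑ j, x i * A i j * x j := by
    rw [hinner]
    congr 1; ext i
    rw [hyi, Finset.mul_sum]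
    congr 1; ext j; ring
  have hxx : ⟪x, x⟫_ℝ = ∑ i, x i * x i := hinner x x
  rw [← hxy, ← hxx]
  rw [← B.sum_inner_mul_inner x y, ← B.sum_inner_mul_inner x x]
  rw [Finset.mul_sum]
  apply Finset.sum_le_sum
  intro j _
  rw [key, real_inner_comm x (B j)]
  have h1 : lam j ≤ M := le_ciSup hbdd j
  have h2 : (0:ℝ) ≤ ⟪B j, x⟫_ℝ * ⟪B j, x⟫_ℝ := mul_self_nonneg _
  nlinarith [mul_le_mul_of_nonneg_right h1 h2]

theorem stmt_0 {V : Type*} [Fintype V] [DecidableEq V] [Nonempty V]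
    (G : SimpleGraph V) (A : Matrix V V ℝ) (hA : A.IsHermitian)
    (h1 : ∀ i j : V, ¬ G.Adj i j → A i j = 1)
    (I : Finset V) (hI : ∀ i ∈ I, ∀ j ∈ I, ¬ G.Adj i j) :
    (I.card : ℝ) ≤ ⨆ i, hA.eigenvalues i := by
  classical
  set M : ℝ := ⨆ i, hA.eigenvalues i with hM
  -- first: 1 ≤ M using a standard basis vector
  obtain ⟨i0⟩ := ‹Nonempty V›
  have hone : (1:ℝ) ≤ M := by
    have := rayleigh_aux A hA ((WithLp.equiv 2 (V → ℝ)).symm (fun i => if i = i0 then 1 else 0))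
    simpa [Finset.sum_ite_eq', h1 i0 i0 (G.irrefl)] using this
  rcases Finset.eq_empty_or_nonempty I with hE | hne
  · simp [hE]; linarith
  · have hcard : (0:ℝ) < I.card := by exact_mod_cast Finset.card_pos.mpr hne
    set x : EuclideanSpace ℝ V := (WithLp.equiv 2 (V → ℝ)).symm (fun i => if i ∈ I then 1 else 0) with hx
    have hray := rayleigh_aux A hA x
    have hxi : ∀ i, x i = if i ∈ I then (1:ℝ) else 0 := fun i => rfl
    have hLHS : ∑ i, ∑ j, x i * A i j * x j = (I.card : ℝ) * I.card := by
      have : ∀ i j, x i * A i j * x j = if i ∈ I ∧ j ∈ I then A i j else 0 := by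
        intro i j; rw [hxi, hxi]; split_ifs with h h2 h3 <;> simp_all
      simp_rw [this]
      rw [Finset.sum_comm]
      calc ∑ j, ∑ i, (if i ∈ I ∧ j ∈ I then A i j else 0)
          = ∑ j ∈ I, ∑ i ∈ I, A i j := by
            rw [← Finset.sum_subset (Finset.subset_univ I)
              (by intro j _ hj; exact Finset.sum_eq_zero (by intro i _; simp [hj]))]
            refine Finset.sum_congr rfl fun j hj => ?_
            rw [← Finset.sum_subset (Finset.subset_univ I)
              (by intro i _ hi; simp [hi])]
            exact Finset.sum_congr rfl fun i hi => by simp [hi, hj]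
        _ = (I.card : ℝ) * I.card := by
            rw [Finset.sum_congr rfl (fun j hj => Finset.sum_congr rfl
              (fun i hi => h1 i j (hI i hi j hj)))]
            simp [mul_comm]
    have hRHS : ∑ i, x i * x i = (I.card : ℝ) := by
      simp_rw [hxi]
      simp [Finset.sum_ite_mem, mul_ite]
    rw [hLHS, hRHS] at hray
    calc (I.card : ℝ) = (I.card * I.card) / I.card := by field_simp
      _ ≤ (M * I.card) / I.card := by
            apply div_le_div_of_nonneg_right (c := (I.card:ℝ)) ?_ hcard.le
            exact hray
      _ = M := by field_simp
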